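/- Let a be a real number and define Φ : {(τ,η) ∈ ℝ² : τ > 0} → ℝ² by Φ(τ,η) = ( √(2τ)(3a²η² − τ²)/(3(a²η² + τ²)²), 2a²η(2τ)^{3/2}/(3(a²η² + τ²)²) ). Then Φ is differentiable on its domain and the determinant of its Jacobian matrix at (τ,η) equals 4a²τ(3a²η² + τ²)/(3(a²η² + τ²)⁴). In particular, if a ≠ 0 the Jacobian determinant is strictly positive at every point of the domain. -/

import Mathlib

/-- First component of the closed-form period map of Family 1. -/
noncomputable def Phi1 (a τ η : ℝ) : ℝ :=
  Real.sqrt (2*τ) * (3*a^2*η^2 - τ^2) / (3*(a^2*η^2 + τ^2)^2)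

/-- Second component of the closed-form period map of Family 1. -/
noncomputable def Phi2 (a τ η : ℝ) : ℝ :=
  2*a^2*η*(Real.sqrt (2*τ))^3 / (3*(a^2*η^2 + τ^2)^2)

/-- Derivative of `t ↦ √(2t)` at a positive point. -/
lemma hasDerivAt_sqrt2 (τ : ℝ) (hτ : 0 < τ) :
    HasDerivAt (fun t : ℝ => Real.sqrt (2*t)) (1 / Real.sqrt (2*τ)) τ := by
  have hne : (2*τ : ℝ) ≠ 0 := by positivity
  have h1 : HasDerivAt (fun t : ℝ => 2*t) 2 τ := by
    simpa using (hasDerivAt_id τ).const_mul (2:ℝ)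
  have h2 := (Real.hasDerivAt_sqrt hne).comp τ h1
  have hs0 : Real.sqrt (2*τ) ≠ 0 := by positivity
  refine h2.congr_deriv ?_
  ring

/-- The closed-form period map of Family 1 is differentiable on `{τ > 0}`, its Jacobian
determinant equals `4a²τ(3a²η² + τ²)/(3(a²η² + τ²)⁴)`, and the latter is positive when
`a ≠ 0`. -/
theorem stmt_11 (a : ℝ) :
    (∀ τ η : ℝ, 0 < τ →
      DifferentiableAt ℝ (fun p : ℝ × ℝ => (Phi1 a p.1 p.2, Phi2 a p.1 p.2)) (τ, η)) ∧
    (∀ τ η : ℝ, 0 < τ →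
      deriv (fun t => Phi1 a t η) τ * deriv (fun e => Phi2 a τ e) η
        - deriv (fun e => Phi1 a τ e) η * deriv (fun t => Phi2 a t η) τ
        = 4*a^2*τ*(3*a^2*η^2 + τ^2) / (3*(a^2*η^2 + τ^2)^4)) ∧
    (a ≠ 0 → ∀ τ η : ℝ, 0 < τ →
      0 < 4*a^2*τ*(3*a^2*η^2 + τ^2) / (3*(a^2*η^2 + τ^2)^4)) := by
  refine ⟨?_, ?_, ?_⟩
  · -- Differentiability of the pair map
    intro τ η hτ
    have h1 : DifferentiableAt ℝ (fun p : ℝ × ℝ => 2*p.1) (τ, η) :=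
      differentiableAt_fst.const_mul 2
    have hs : DifferentiableAt ℝ (fun p : ℝ × ℝ => Real.sqrt (2*p.1)) (τ, η) :=
      h1.sqrt (by positivity : 2*(τ,η).1 ≠ 0)
    have hD : (3*(a^2*η^2 + τ^2)^2) ≠ 0 := by positivity
    have hden : DifferentiableAt ℝ (fun p : ℝ × ℝ => 3*(a^2*p.2^2 + p.1^2)^2) (τ, η) := by
      fun_prop
    have hq1 : DifferentiableAt ℝ (fun p : ℝ × ℝ => 3*a^2*p.2^2 - p.1^2) (τ, η) := by
      fun_prop
    have hq2 : DifferentiableAt ℝ (fun p : ℝ × ℝ => 2*a^2*p.2) (τ, η) := by fun_prop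
    apply DifferentiableAt.prodMk
    · simp only [Phi1, div_eq_mul_inv]
      exact (hs.mul hq1).mul (hden.inv hD)
    · simp only [Phi2, div_eq_mul_inv]
      exact (hq2.mul (hs.pow 3)).mul (hden.inv hD)
  · -- Jacobian determinant computation
    intro τ η hτ
    obtain ⟨s, hs0, rfl⟩ : ∃ s : ℝ, 0 < s ∧ τ = s^2/2 :=
      ⟨Real.sqrt (2*τ), Real.sqrt_pos.2 (by positivity), by
        rw [Real.sq_sqrt (by positivity : (0:ℝ) ≤ 2*τ)]; ring⟩
    set σ : ℝ := s^2/2 with hσdef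
    have hσ : 0 < σ := hτ
    have hD : (0:ℝ) < a^2*η^2 + σ^2 := by positivity
    have hv0 : (3*(a^2*η^2 + σ^2)^2) ≠ 0 := by positivity
    have hsq : Real.sqrt (2*σ) ≠ 0 := by positivity
    -- τ-derivative of Phi1
    have hu1 : HasDerivAt (fun t : ℝ => Real.sqrt (2*t) * (3*a^2*η^2 - t^2))
        ((1/Real.sqrt (2*σ))*(3*a^2*η^2 - σ^2) + Real.sqrt (2*σ)*(-(2*σ))) σ := by
      have hq : HasDerivAt (fun t : ℝ => 3*a^2*η^2 - t^2) (-(2*σ)) σ := by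
        simpa using (hasDerivAt_pow 2 σ).const_sub (3*a^2*η^2)
      exact (hasDerivAt_sqrt2 σ hσ).mul hq
    have hv1 : HasDerivAt (fun t : ℝ => 3*(a^2*η^2 + t^2)^2)
        (12*(a^2*η^2+σ^2)*σ) σ := by
      have := (((hasDerivAt_pow 2 σ).const_add (a^2*η^2)).pow 2).const_mul (3:ℝ)
      refine this.congr_deriv ?_
      push_cast; ring
    have h1t := (hu1.div hv1 hv0).deriv
    -- η-derivative of Phi1
    have hq2 : HasDerivAt (fun e : ℝ => 3*a^2*e^2 - σ^2) (3*a^2*(2*η)) η := by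
      have := ((hasDerivAt_pow 2 η).const_mul (3*a^2)).sub_const (σ^2)
      refine this.congr_deriv ?_
      push_cast; ring
    have hu2 : HasDerivAt (fun e : ℝ => Real.sqrt (2*σ) * (3*a^2*e^2 - σ^2))
        (Real.sqrt (2*σ) * (3*a^2*(2*η))) η := hq2.const_mul _
    have hv2 : HasDerivAt (fun e : ℝ => 3*(a^2*e^2 + σ^2)^2)
        (12*(a^2*η^2+σ^2)*(a^2*η)) η := by
      have := ((((hasDerivAt_pow 2 η).const_mul (a^2)).add_const (σ^2)).pow 2).const_mul (3:ℝ)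
      refine this.congr_deriv ?_
      push_cast; ring
    have h1e := (hu2.div hv2 hv0).deriv
    -- η-derivative of Phi2
    have hu3 : HasDerivAt (fun e : ℝ => 2*a^2*e*(Real.sqrt (2*σ))^3)
        (2*a^2*(Real.sqrt (2*σ))^3) η := by
      have := ((hasDerivAt_id η).const_mul (2*a^2)).mul_const ((Real.sqrt (2*σ))^3)
      refine this.congr_deriv ?_
      ring
    have h2e := (hu3.div hv2 hv0).deriv
    -- τ-derivative of Phi2
    have hu4 : HasDerivAt (fun t : ℝ => 2*a^2*η*(Real.sqrt (2*t))^3)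
        (2*a^2*η*(3*(Real.sqrt (2*σ))^2*(1/Real.sqrt (2*σ)))) σ := by
      have := ((hasDerivAt_sqrt2 σ hσ).pow 3).const_mul (2*a^2*η)
      refine this.congr_deriv ?_
      norm_num
    have h2t := (hu4.div hv1 hv0).deriv
    simp only [Phi1, Phi2]
    simp only [Pi.div_def] at h1t h1e h2e h2t
    rw [h1t, h1e, h2e, h2t]
    have hsqrt : Real.sqrt (2*σ) = s := by
      rw [hσdef, show 2*(s^2/2) = s^2 by ring, Real.sqrt_sq hs0.le]
    rw [hsqrt]
    rw [hσdef]
    have hD' : a^2*η^2 + (s^2/2)^2 ≠ 0 := by rw [hσdef] at hD; positivity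
    field_simp
    ring
  · -- Positivity of the Jacobian determinant
    intro ha τ η hτ
    positivity
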